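/- For all q ∈ ℂ with |q| < 1, one has ∑_{m∈ℤ} q^{m²} = ∏_{m=0}^{∞} (1 − q^{8m+8}) · [ (∏_{m=0}^{∞} (1 + q^{8m+4}))² + 2q·(∏_{m=0}^{∞} (1 + q^{8m+8}))² ]. -/

import Mathlib

open Complex Filter Topology Finset

namespace Stmt18

lemma summable_log_one_add {u : ℕ → ℂ} (hu : Summable u) :
    Summable fun n => Complex.log (1 + u n) := by
  apply Summable.of_norm_bounded_eventually (g := fun n => (3/2) * ‖u n‖) (hu.norm.mul_left _)
  rw [Nat.cofinite_eq_atTop]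
  filter_upwards [((norm_zero (E := ℂ) ▸ hu.tendsto_atTop_zero.norm).eventually_le_const (by norm_num : (0:ℝ) < 1/2))]
    with n hn
  exact Complex.norm_log_one_add_half_le_self hn

lemma multipliable_one_add {u : ℕ → ℂ} (hu : Summable u) (h1 : ∀ n, 1 + u n ≠ 0) :
    Multipliable fun n => 1 + u n :=
  Complex.multipliable_of_summable_log (summable_log_one_add hu)

lemma tprod_one_add_ne_zero {u : ℕ → ℂ} (hu : Summable u) (h1 : ∀ n, 1 + u n ≠ 0) :
    (∏' n, (1 + u n)) ≠ 0 := by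
  have h := Complex.cexp_tsum_eq_tprod (f := fun n => 1 + u n) h1 (summable_log_one_add hu)
  rw [← h]
  exact Complex.exp_ne_zero _

lemma one_sub_ne {w : ℂ} (h : ‖w‖ < 1) : 1 - w ≠ 0 := by
  intro h'
  rw [sub_eq_zero] at h'
  rw [← h'] at h
  simp at h

lemma one_add_ne {w : ℂ} (h : ‖w‖ < 1) : 1 + w ≠ 0 := by
  intro h'
  have : w = -1 := by linear_combination h' - (1:ℂ)
  rw [this] at h
  simp at h

lemma abs_pow_lt_one {q : ℂ} (hq : ‖q‖ < 1) {n : ℕ} (hn : n ≠ 0) :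
    ‖q ^ n‖ < 1 := by
  rw [norm_pow]
  exact pow_lt_one₀ (norm_nonneg q) hq hn

noncomputable def G (q : ℂ) (n : ℕ) : ℂ := ∏ i ∈ Finset.range n, (1 - q ^ (2 * i + 2))

noncomputable def F (q : ℂ) (n r : ℕ) : ℂ :=
  if r ≤ n then G q n / (G q r * G q (n - r)) else 0

variable {q : ℂ}

lemma G_ne (hq : ‖q‖ < 1) (n : ℕ) : G q n ≠ 0 :=
  Finset.prod_ne_zero_iff.2 fun i _ => one_sub_ne (abs_pow_lt_one hq (by omega))

lemma G_zero : G q 0 = 1 := by simp [G]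

lemma G_succ (n : ℕ) : G q (n + 1) = G q n * (1 - q ^ (2 * n + 2)) := by
  simp [G, Finset.prod_range_succ]

lemma F_zero (hq : ‖q‖ < 1) (n : ℕ) : F q n 0 = 1 := by
  simp [F, G_zero, div_self (G_ne hq n)]

lemma F_self (hq : ‖q‖ < 1) (n : ℕ) : F q n n = 1 := by
  simp [F, G_zero, div_self (G_ne hq n)]

lemma F_of_gt {n r : ℕ} (h : n < r) : F q n r = 0 := by
  simp [F, Nat.not_le.2 h]

lemma P2 (hq : ‖q‖ < 1) (n r : ℕ) :
    F q (n + 1) (r + 1) = F q n r + q ^ (2 * (r + 1)) * F q n (r + 1) := by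
  rcases lt_trichotomy r n with h | rfl | h
  · obtain ⟨a, rfl⟩ : ∃ a, n = r + 1 + a := ⟨n - r - 1, by omega⟩
    have e1 : r + 1 + a + 1 - (r + 1) = a + 1 := by omega
    have e2 : r + 1 + a - r = a + 1 := by omega
    have e3 : r + 1 + a - (r + 1) = a := by omega
    simp only [F, if_pos (by omega : r + 1 ≤ r + 1 + a + 1), if_pos (by omega : r ≤ r + 1 + a),
      if_pos (by omega : r + 1 ≤ r + 1 + a), e1, e2, e3]
    rw [show r + 1 + a + 1 = (r + 1 + a) + 1 from rfl, G_succ, G_succ r, G_succ a]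
    have h1 := G_ne hq (r + 1 + a)
    have h2 := G_ne hq r
    have h3 := G_ne hq a
    have h4 : (1 : ℂ) - q ^ (2 * r + 2) ≠ 0 := one_sub_ne (abs_pow_lt_one hq (by omega))
    have h5 : (1 : ℂ) - q ^ (2 * a + 2) ≠ 0 := one_sub_ne (abs_pow_lt_one hq (by omega))
    field_simp
    ring
  · rw [F_self hq, F_self hq, F_of_gt (by omega), mul_zero, add_zero]
  · rw [F_of_gt (by omega), F_of_gt (by omega), F_of_gt (by omega), mul_zero, add_zero]

lemma P1 (hq : ‖q‖ < 1) (n r : ℕ) :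
    F q (n + 1) (r + 1) = F q n (r + 1) + q ^ (2 * (n - r)) * F q n r := by
  rcases lt_trichotomy r n with h | rfl | h
  · obtain ⟨a, rfl⟩ : ∃ a, n = r + 1 + a := ⟨n - r - 1, by omega⟩
    have e1 : r + 1 + a + 1 - (r + 1) = a + 1 := by omega
    have e2 : r + 1 + a - r = a + 1 := by omega
    have e3 : r + 1 + a - (r + 1) = a := by omega
    simp only [F, if_pos (by omega : r + 1 ≤ r + 1 + a + 1), if_pos (by omega : r ≤ r + 1 + a),
      if_pos (by omega : r + 1 ≤ r + 1 + a), e1, e2, e3]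
    rw [show r + 1 + a + 1 = (r + 1 + a) + 1 from rfl, G_succ, G_succ r, G_succ a]
    have h1 := G_ne hq (r + 1 + a)
    have h2 := G_ne hq r
    have h3 := G_ne hq a
    have h4 : (1 : ℂ) - q ^ (2 * r + 2) ≠ 0 := one_sub_ne (abs_pow_lt_one hq (by omega))
    have h5 : (1 : ℂ) - q ^ (2 * a + 2) ≠ 0 := one_sub_ne (abs_pow_lt_one hq (by omega))
    field_simp
    ring
  · rw [F_self hq, F_of_gt (by omega), F_self hq, Nat.sub_self, mul_zero, pow_zero, one_mul,
      zero_add]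
  · rw [F_of_gt (by omega), F_of_gt (by omega), F_of_gt (by omega), mul_zero, add_zero]

lemma pascal2 (hq : ‖q‖ < 1) (N s : ℕ) (hs : s ≤ 2 * N + 2) :
    F q (2 * N + 2) s =
      (if 1 ≤ s then F q (2 * N) (s - 1) else 0) * (1 + q ^ (2 * (2 * N + 1)))
        + q ^ (2 * s) * F q (2 * N) s
        + (if 2 ≤ s then q ^ (2 * (2 * N - (s - 2))) * F q (2 * N) (s - 2) else 0) := by
  match s with
  | 0 => simp [F_zero hq]
  | 1 =>
    have h1 : F q (2*N+2) 1 = F q (2*N+1) 1 + q ^ (2*(2*N+1)) * F q (2*N+1) 0 := by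
      have := P1 hq (2*N+1) 0
      simpa using this
    rw [h1, show F q (2*N+1) 1 = F q (2*N) 0 + q ^ (2*1) * F q (2*N) 1 from by simpa using P2 hq (2*N) 0,
      F_zero hq, F_zero hq]
    simp
    ring
  | (t+2) =>
    have ht : t ≤ 2 * N := by omega
    have h1 : F q (2*N+2) (t+2) = F q (2*N+1) (t+2) + q ^ (2*(2*N - t)) * F q (2*N+1) (t+1) := by
      rw [P1 hq (2*N+1) (t+1), show 2*N+1-(t+1) = 2*N-t from by omega]
    rw [h1, P2 hq (2*N) (t+1), P2 hq (2*N) t]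
    simp only [if_pos (by omega : 1 ≤ t+2), if_pos (by omega : 2 ≤ t+2),
      show t+2-1 = t+1 from by omega, show t+2-2 = t from by omega]
    have hqq : q ^ (t*2) * q ^ ((N*2 - t)*2) = q ^ (N*4) := by
      rw [← pow_add]
      congr 1
      omega
    ring_nf
    linear_combination F q (N*2) (1+t) * q^2 * hqq
lemma shift1 (m : ℕ) (f : ℕ → ℂ) :
    ∑ s ∈ Finset.range m, f s = ∑ s ∈ Finset.range (m + 1), (if 1 ≤ s then f (s - 1) else 0) := by
  rw [Finset.sum_range_succ']
  simp

lemma shift2 (m : ℕ) (f : ℕ → ℂ) :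
    ∑ s ∈ Finset.range m, f s = ∑ s ∈ Finset.range (m + 2), (if 2 ≤ s then f (s - 2) else 0) := by
  rw [Finset.sum_range_succ', Finset.sum_range_succ']
  simp

lemma R1 (h : 1 ≤ (s : ℕ)) (N : ℕ) :
    q ^ ((((s-1 : ℕ) : ℤ) - (N : ℕ)) ^ 2) * z ^ (((s-1 : ℕ) : ℤ) - (N : ℕ))
      = q ^ (((s : ℤ) - ((N+1 : ℕ) : ℤ)) ^ 2) * z ^ ((s : ℤ) - ((N+1 : ℕ) : ℤ)) := by
  have e : ((s - 1 : ℕ) : ℤ) - (N : ℕ) = (s : ℤ) - ((N + 1 : ℕ) : ℤ) := by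
    push_cast [h]; ring
  rw [e]

lemma R2 (h0 : q ≠ 0) (hz : z ≠ 0) (N s : ℕ) :
    q ^ (((s : ℤ) - (N : ℕ)) ^ 2) * z ^ ((s : ℤ) - (N : ℕ)) * (z⁻¹ * q ^ (2 * N + 1))
      = q ^ (2 * s) * (q ^ (((s : ℤ) - ((N+1 : ℕ) : ℤ)) ^ 2) * z ^ ((s : ℤ) - ((N+1 : ℕ) : ℤ))) := by
  have hzz : z ^ ((s : ℤ) - (N : ℕ)) * z⁻¹ = z ^ ((s : ℤ) - ((N+1 : ℕ) : ℤ)) := by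
    rw [show (s : ℤ) - ((N+1 : ℕ) : ℤ) = ((s : ℤ) - (N : ℕ)) - 1 from by push_cast; ring,
      zpow_sub_one₀ hz]
  have hqq : q ^ (((s : ℤ) - (N : ℕ)) ^ 2) * q ^ (2 * N + 1 : ℕ)
      = q ^ (2 * s : ℕ) * q ^ (((s : ℤ) - ((N+1 : ℕ) : ℤ)) ^ 2) := by
    rw [← zpow_natCast q (2 * N + 1), ← zpow_natCast q (2 * s), ← zpow_add₀ h0, ← zpow_add₀ h0]
    congr 1
    push_cast
    ring
  calc q ^ (((s : ℤ) - (N : ℕ)) ^ 2) * z ^ ((s : ℤ) - (N : ℕ)) * (z⁻¹ * q ^ (2 * N + 1))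
      = (q ^ (((s : ℤ) - (N : ℕ)) ^ 2) * q ^ (2 * N + 1 : ℕ)) * (z ^ ((s : ℤ) - (N : ℕ)) * z⁻¹) := by
        ring
    _ = (q ^ (2 * s : ℕ) * q ^ (((s : ℤ) - ((N+1 : ℕ) : ℤ)) ^ 2)) * z ^ ((s : ℤ) - ((N+1 : ℕ) : ℤ)) := by
        rw [hqq, hzz]
    _ = _ := by ring

lemma R3 (h0 : q ≠ 0) (hz : z ≠ 0) {N s : ℕ} (h : s ≤ 2 * N) :
    q ^ (((s : ℤ) - (N : ℕ)) ^ 2) * z ^ ((s : ℤ) - (N : ℕ)) * (z * q ^ (2 * N + 1))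
      = q ^ (2 * (2 * N - s)) *
        (q ^ ((((s+2 : ℕ) : ℤ) - ((N+1 : ℕ) : ℤ)) ^ 2) * z ^ (((s+2 : ℕ) : ℤ) - ((N+1 : ℕ) : ℤ))) := by
  have hzz : z ^ ((s : ℤ) - (N : ℕ)) * z = z ^ (((s+2 : ℕ) : ℤ) - ((N+1 : ℕ) : ℤ)) := by
    rw [show ((s+2 : ℕ) : ℤ) - ((N+1 : ℕ) : ℤ) = ((s : ℤ) - (N : ℕ)) + 1 from by push_cast; ring,
      zpow_add_one₀ hz]
  have hqq : q ^ (((s : ℤ) - (N : ℕ)) ^ 2) * q ^ (2 * N + 1 : ℕ)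
      = q ^ (2 * (2 * N - s) : ℕ) * q ^ ((((s+2 : ℕ) : ℤ) - ((N+1 : ℕ) : ℤ)) ^ 2) := by
    rw [← zpow_natCast q (2 * N + 1), ← zpow_natCast q (2 * (2 * N - s)), ← zpow_add₀ h0,
      ← zpow_add₀ h0]
    congr 1
    push_cast [h]
    ring
  calc q ^ (((s : ℤ) - (N : ℕ)) ^ 2) * z ^ ((s : ℤ) - (N : ℕ)) * (z * q ^ (2 * N + 1))
      = (q ^ (((s : ℤ) - (N : ℕ)) ^ 2) * q ^ (2 * N + 1 : ℕ)) * (z ^ ((s : ℤ) - (N : ℕ)) * z) := by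
        ring
    _ = (q ^ (2 * (2 * N - s) : ℕ) * q ^ ((((s+2 : ℕ) : ℤ) - ((N+1 : ℕ) : ℤ)) ^ 2)) *
          z ^ (((s+2 : ℕ) : ℤ) - ((N+1 : ℕ) : ℤ)) := by
        rw [hqq, hzz]
    _ = _ := by ring

lemma finite_jtp (hq : ‖q‖ < 1) (h0 : q ≠ 0) (hz : z ≠ 0) (N : ℕ) :
    (∏ j ∈ Finset.range N, (1 + z * q ^ (2 * j + 1))) *
        (∏ j ∈ Finset.range N, (1 + z⁻¹ * q ^ (2 * j + 1)))
      = ∑ s ∈ Finset.range (2 * N + 1),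
          F q (2 * N) s * (q ^ (((s : ℤ) - (N : ℕ)) ^ 2) * z ^ ((s : ℤ) - (N : ℕ))) := by
  induction N with
  | zero => simp [F_zero hq]
  | succ N ih =>
    have hfact : (1 + z * q ^ (2 * N + 1)) * (1 + z⁻¹ * q ^ (2 * N + 1))
        = (1 + q ^ (2 * (2 * N + 1))) + z⁻¹ * q ^ (2 * N + 1) + z * q ^ (2 * N + 1) := by
      field_simp
      ring
    rw [Finset.prod_range_succ, Finset.prod_range_succ,
      show ∀ a b c d : ℂ, a * b * (c * d) = (a * c) * (b * d) from fun a b c d => by ring,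
      ih, hfact, mul_add, mul_add]
    rw [show 2 * (N + 1) + 1 = 2 * N + 3 from by ring, show 2 * (N + 1) = 2 * N + 2 from by ring]
    have hS1 : (∑ s ∈ Finset.range (2 * N + 1),
          F q (2 * N) s * (q ^ (((s : ℤ) - (N : ℕ)) ^ 2) * z ^ ((s : ℤ) - (N : ℕ)))) *
            (1 + q ^ (2 * (2 * N + 1)))
        = ∑ s ∈ Finset.range (2 * N + 3), (if 1 ≤ s then
            F q (2 * N) (s - 1) * (q ^ ((((s-1 : ℕ) : ℤ) - (N : ℕ)) ^ 2) *
              z ^ (((s-1 : ℕ) : ℤ) - (N : ℕ))) * (1 + q ^ (2 * (2 * N + 1))) else 0) := by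
      rw [Finset.sum_mul, shift1]
      apply Finset.sum_subset (Finset.range_subset_range.2 (by omega))
      intro s hs hns
      simp only [Finset.mem_range] at hs hns
      rw [if_pos (by omega), F_of_gt (by omega : 2 * N < s - 1), zero_mul, zero_mul]
    have hS2 : (∑ s ∈ Finset.range (2 * N + 1),
          F q (2 * N) s * (q ^ (((s : ℤ) - (N : ℕ)) ^ 2) * z ^ ((s : ℤ) - (N : ℕ)))) *
            (z⁻¹ * q ^ (2 * N + 1))
        = ∑ s ∈ Finset.range (2 * N + 3),
            F q (2 * N) s * (q ^ (2 * s) *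
              (q ^ (((s : ℤ) - ((N+1 : ℕ) : ℤ)) ^ 2) * z ^ ((s : ℤ) - ((N+1 : ℕ) : ℤ)))) := by
      rw [Finset.sum_mul]
      rw [Finset.sum_congr rfl (fun s _ => by
        rw [mul_assoc, R2 h0 hz N s, ← mul_assoc, mul_assoc] :
          ∀ s ∈ Finset.range (2 * N + 1), _ = F q (2 * N) s * (q ^ (2 * s) *
            (q ^ (((s : ℤ) - ((N+1 : ℕ) : ℤ)) ^ 2) * z ^ ((s : ℤ) - ((N+1 : ℕ) : ℤ)))))]
      apply Finset.sum_subset (Finset.range_subset_range.2 (by omega))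
      intro s hs hns
      simp only [Finset.mem_range] at hs hns
      rw [F_of_gt (by omega : 2 * N < s), zero_mul]
    have hS3 : (∑ s ∈ Finset.range (2 * N + 1),
          F q (2 * N) s * (q ^ (((s : ℤ) - (N : ℕ)) ^ 2) * z ^ ((s : ℤ) - (N : ℕ)))) *
            (z * q ^ (2 * N + 1))
        = ∑ s ∈ Finset.range (2 * N + 3), (if 2 ≤ s then
            F q (2 * N) (s - 2) * (q ^ (2 * (2 * N - (s - 2))) *
              (q ^ (((s : ℤ) - ((N+1 : ℕ) : ℤ)) ^ 2) * z ^ ((s : ℤ) - ((N+1 : ℕ) : ℤ)))) else 0) := by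
      rw [Finset.sum_mul]
      rw [Finset.sum_congr rfl (fun s hs => by
        rw [mul_assoc, R3 h0 hz (by simpa using Nat.lt_succ_iff.mp (Finset.mem_range.1 hs)),
          ← mul_assoc, mul_assoc] :
          ∀ s ∈ Finset.range (2 * N + 1), _ = F q (2 * N) s * (q ^ (2 * (2 * N - s)) *
            (q ^ ((((s+2 : ℕ) : ℤ) - ((N+1 : ℕ) : ℤ)) ^ 2) *
              z ^ (((s+2 : ℕ) : ℤ) - ((N+1 : ℕ) : ℤ)))))]
      rw [shift2, show 2 * N + 1 + 2 = 2 * N + 3 from by ring]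
      apply Finset.sum_congr rfl
      intro s _
      by_cases h2 : 2 ≤ s
      · rw [if_pos h2, if_pos h2, show s - 2 + 2 = s from by omega]
      · rw [if_neg h2, if_neg h2]
    rw [hS1, hS2, hS3, ← Finset.sum_add_distrib, ← Finset.sum_add_distrib]
    apply Finset.sum_congr rfl
    intro s hs
    simp only [Finset.mem_range] at hs
    rw [pascal2 hq N s (by omega), add_mul, add_mul]
    congr 1
    · congr 1
      · rw [ite_mul, ite_mul, zero_mul, zero_mul]
        split_ifs with h1
        · rw [R1 h1 N]
          ring
        · rfl
      · ring
    · rw [ite_mul, zero_mul]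
      split_ifs with h2
      · ring
      · rfl
lemma summable_qpow (hq : ‖q‖ < 1) {a : ℕ} (ha : a ≠ 0) (b : ℕ) :
    Summable (fun n : ℕ => q ^ (a * n + b)) := by
  have h : ∀ n, q ^ (a * n + b) = (q ^ a) ^ n * q ^ b := fun n => by rw [pow_add, pow_mul]
  simp_rw [h]
  apply Summable.mul_right
  apply summable_geometric_of_norm_lt_one
  rw [norm_pow]
  exact pow_lt_one₀ (norm_nonneg q) hq ha

lemma multipliable_G (hq : ‖q‖ < 1) :
    Multipliable (fun i : ℕ => 1 - q ^ (2 * i + 2)) := by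
  have := multipliable_one_add (u := fun i : ℕ => -(q ^ (2 * i + 2)))
    ((summable_qpow hq two_ne_zero 2).neg)
    (fun n => by rw [← sub_eq_add_neg]; exact one_sub_ne (abs_pow_lt_one hq (by omega)))
  simpa only [← sub_eq_add_neg] using this

lemma E_ne (hq : ‖q‖ < 1) : (∏' i : ℕ, (1 - q ^ (2 * i + 2))) ≠ 0 := by
  have := tprod_one_add_ne_zero (u := fun i : ℕ => -(q ^ (2 * i + 2)))
    ((summable_qpow hq two_ne_zero 2).neg)
    (fun n => by rw [← sub_eq_add_neg]; exact one_sub_ne (abs_pow_lt_one hq (by omega)))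
  simpa only [← sub_eq_add_neg] using this

lemma G_tendsto (hq : ‖q‖ < 1) :
    Tendsto (G q) atTop (𝓝 (∏' i : ℕ, (1 - q ^ (2 * i + 2)))) :=
  (multipliable_G hq).hasProd.tendsto_prod_nat

lemma G_abs_bounds (hq : ‖q‖ < 1) :
    ∃ c C : ℝ, 0 < c ∧ (∀ n, c ≤ ‖G q n‖) ∧ ∀ n, ‖G q n‖ ≤ C := by
  have ht : Tendsto (fun n => ‖G q n‖) atTop
      (𝓝 (‖∏' i : ℕ, (1 - q ^ (2 * i + 2))‖)) :=
    (continuous_norm.tendsto _).comp (G_tendsto hq)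
  have hpos : 0 < ‖∏' i : ℕ, (1 - q ^ (2 * i + 2))‖ :=
    norm_pos_iff.2 (E_ne hq)
  obtain ⟨C, hC⟩ := (ht.bddAbove_range)
  obtain ⟨M, hM⟩ := eventually_atTop.mp (ht.eventually_const_lt (half_lt_self hpos))
  have hne : (Finset.range (M + 1)).Nonempty := ⟨0, by simp⟩
  refine ⟨min (‖∏' i : ℕ, (1 - q ^ (2 * i + 2))‖ / 2)
    ((Finset.range (M + 1)).inf' hne (fun n => ‖G q n‖)), C, ?_, ?_, ?_⟩
  · apply lt_min (by positivity)
    exact (Finset.lt_inf'_iff hne).2 fun b _ => norm_pos_iff.2 (G_ne hq b)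
  · intro n
    rcases le_or_gt n M with h | h
    · exact le_trans (min_le_right _ _) (Finset.inf'_le _ (by simp; omega))
    · exact le_trans (min_le_left _ _) (hM n (by omega)).le
  · intro n
    exact hC ⟨n, rfl⟩

lemma F_abs_bound (hq : ‖q‖ < 1) :
    ∃ C : ℝ, 0 ≤ C ∧ ∀ n r, ‖F q n r‖ ≤ C := by
  obtain ⟨c, C, hc, hlow, hup⟩ := G_abs_bounds hq
  have hC0 : 0 ≤ C := le_trans (norm_nonneg _) (hup 0)
  refine ⟨C / (c * c), by positivity, fun n r => ?_⟩
  rw [F]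
  split_ifs with h
  · rw [norm_div, norm_mul]
    exact div_le_div₀ hC0 (hup n) (mul_pos hc hc)
      (mul_le_mul (hlow r) (hlow (n - r)) hc.le (norm_nonneg _))
  · simpa using by positivity

lemma summable_sq_aux {r : ℝ} (h0 : 0 ≤ r) (h1 : r < 1) (w : ℝ) (hw : 0 ≤ w) :
    Summable (fun n : ℕ => r ^ (n ^ 2) * w ^ n) := by
  have hten : Tendsto (fun n : ℕ => r ^ n * w) atTop (𝓝 0) := by
    simpa using (tendsto_pow_atTop_nhds_zero_of_lt_one h0 h1).mul_const w
  apply Summable.of_norm_bounded_eventually (g := fun n => (1 / 2 : ℝ) ^ n)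
    (summable_geometric_of_lt_one (by norm_num) (by norm_num))
  rw [Nat.cofinite_eq_atTop]
  filter_upwards [hten.eventually_le_const (by norm_num : (0 : ℝ) < 1 / 2)] with n hn
  have e : r ^ (n ^ 2) * w ^ n = (r ^ n * w) ^ n := by
    rw [mul_pow, ← pow_mul, ← pow_two]
  rw [e, Real.norm_of_nonneg (by positivity)]
  exact pow_le_pow_left₀ (by positivity) hn n

lemma summable_abs_qz (hq : ‖q‖ < 1) (z : ℂ) :
    Summable (fun k : ℤ => ‖q ^ (k ^ 2) * z ^ k‖) := by
  apply Summable.of_nat_of_neg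
  · apply Summable.congr (summable_sq_aux (norm_nonneg q) hq ‖z‖
      (norm_nonneg z))
    intro n
    rw [show (((n : ℤ)) ^ 2) = ((n ^ 2 : ℕ) : ℤ) from by push_cast; ring, zpow_natCast,
      zpow_natCast, norm_mul, norm_pow, norm_pow]
  · apply Summable.congr (summable_sq_aux (norm_nonneg q) hq ‖z‖⁻¹
      (by positivity))
    intro n
    rw [show ((-(n : ℤ)) ^ 2) = ((n ^ 2 : ℕ) : ℤ) from by push_cast; ring, zpow_natCast,
      zpow_neg, zpow_natCast, norm_mul, norm_inv, norm_pow, norm_pow, inv_pow]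

lemma summable_qz (hq : ‖q‖ < 1) (z : ℂ) :
    Summable (fun k : ℤ => q ^ (k ^ 2) * z ^ k) :=
  Summable.of_norm (summable_abs_qz hq z)

theorem jtp (hq : ‖q‖ < 1) (h0 : q ≠ 0) {z : ℂ} (hz : z ≠ 0)
    (hf1 : ∀ j : ℕ, 1 + z * q ^ (2 * j + 1) ≠ 0)
    (hf2 : ∀ j : ℕ, 1 + z⁻¹ * q ^ (2 * j + 1) ≠ 0) :
    ∑' k : ℤ, q ^ (k ^ 2) * z ^ k
      = (∏' i : ℕ, (1 - q ^ (2 * i + 2))) *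
        ((∏' j : ℕ, (1 + z * q ^ (2 * j + 1))) * (∏' j : ℕ, (1 + z⁻¹ * q ^ (2 * j + 1)))) := by
  have hm1 : Multipliable (fun j : ℕ => 1 + z * q ^ (2 * j + 1)) :=
    multipliable_one_add ((summable_qpow hq two_ne_zero 1).mul_left z) hf1
  have hm2 : Multipliable (fun j : ℕ => 1 + z⁻¹ * q ^ (2 * j + 1)) :=
    multipliable_one_add ((summable_qpow hq two_ne_zero 1).mul_left z⁻¹) hf2
  have T1 : Tendsto (fun N => (∏ j ∈ Finset.range N, (1 + z * q ^ (2 * j + 1))) *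
      (∏ j ∈ Finset.range N, (1 + z⁻¹ * q ^ (2 * j + 1)))) atTop
      (𝓝 ((∏' j, (1 + z * q ^ (2 * j + 1))) * (∏' j, (1 + z⁻¹ * q ^ (2 * j + 1))))) :=
    (hm1.hasProd.tendsto_prod_nat).mul (hm2.hasProd.tendsto_prod_nat)
  obtain ⟨C, hC0, hC⟩ := F_abs_bound hq
  have hEne := E_ne hq
  have hGt := G_tendsto hq
  set E := ∏' i : ℕ, (1 - q ^ (2 * i + 2)) with hEdef
  set g : ℕ → ℤ → ℂ := fun N k =>
    if k.natAbs ≤ N then F q (2 * N) ((k + (N : ℤ)).toNat) * (q ^ (k ^ 2) * z ^ k) else 0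
    with hgdef
  have claim1 : ∀ N, (∑ s ∈ Finset.range (2 * N + 1),
      F q (2 * N) s * (q ^ (((s : ℤ) - (N : ℕ)) ^ 2) * z ^ ((s : ℤ) - (N : ℕ))))
        = ∑' k, g N k := by
    intro N
    rw [tsum_eq_sum (s := Finset.Icc (-(N : ℤ)) (N : ℤ)) (fun k hk => by
      simp only [hgdef]
      rw [if_neg]
      simp only [Finset.mem_Icc] at hk
      omega)]
    apply Finset.sum_nbij' (i := fun s : ℕ => (s : ℤ) - N) (j := fun k : ℤ => (k + (N : ℤ)).toNat)
    · intro a ha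
      simp only [Finset.mem_range] at ha
      simp only [Finset.mem_Icc]
      omega
    · intro a ha
      simp only [Finset.mem_Icc] at ha
      simp only [Finset.mem_range]
      omega
    · intro a ha
      simp only [Finset.mem_range] at ha
      omega
    · intro a ha
      simp only [Finset.mem_Icc] at ha
      omega
    · intro a ha
      simp only [Finset.mem_range] at ha
      simp only [hgdef]
      rw [if_pos (by omega), show ((a : ℤ) - (N : ℤ) + (N : ℤ)).toNat = a from by omega]
  have hpoint : ∀ k : ℤ, Tendsto (fun N => g N k) atTop (𝓝 (E⁻¹ * (q ^ (k ^ 2) * z ^ k))) := by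
    intro k
    have hA : Tendsto (fun N : ℕ => (k + (N : ℤ)).toNat) atTop atTop :=
      tendsto_atTop_atTop.mpr fun b => ⟨b + k.natAbs, fun a ha => by omega⟩
    have hB : Tendsto (fun N : ℕ => ((N : ℤ) - k).toNat) atTop atTop :=
      tendsto_atTop_atTop.mpr fun b => ⟨b + k.natAbs, fun a ha => by omega⟩
    have h2N : Tendsto (fun N : ℕ => 2 * N) atTop atTop :=
      tendsto_atTop_atTop.mpr fun b => ⟨b, fun a ha => by omega⟩
    have hG2 : Tendsto (fun N : ℕ => G q (2 * N)) atTop (𝓝 E) := hGt.comp h2N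
    have hGA : Tendsto (fun N : ℕ => G q ((k + (N : ℤ)).toNat)) atTop (𝓝 E) := hGt.comp hA
    have hGB : Tendsto (fun N : ℕ => G q (((N : ℤ) - k).toNat)) atTop (𝓝 E) := hGt.comp hB
    have hD := ((hG2.div (hGA.mul hGB)
      (mul_ne_zero hEne hEne)).mul_const (q ^ (k ^ 2) * z ^ k))
    rw [show E / (E * E) * (q ^ (k ^ 2) * z ^ k) = E⁻¹ * (q ^ (k ^ 2) * z ^ k) from by
      field_simp] at hD
    apply hD.congr'
    filter_upwards [eventually_ge_atTop k.natAbs] with N hN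
    simp only [Pi.div_apply, hgdef]
    rw [if_pos hN, F, if_pos (by omega : (k + (N : ℤ)).toNat ≤ 2 * N),
      show 2 * N - (k + (N : ℤ)).toNat = ((N : ℤ) - k).toNat from by omega]
  have hbound : ∀ᶠ N in atTop, ∀ k : ℤ, ‖g N k‖ ≤ C * ‖q ^ (k ^ 2) * z ^ k‖ := by
    apply Eventually.of_forall
    intro N k
    simp only [hgdef]
    split_ifs with h
    · rw [norm_mul]
      exact mul_le_mul_of_nonneg_right (hC _ _) (norm_nonneg _)
    · simpa using by positivity
  have T2' : Tendsto (fun N => ∑' k, g N k) atTop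
      (𝓝 (∑' k : ℤ, E⁻¹ * (q ^ (k ^ 2) * z ^ k))) :=
    tendsto_tsum_of_dominated_convergence ((summable_abs_qz hq z).mul_left C) hpoint hbound
  rw [tsum_mul_left] at T2'
  have T2 : Tendsto (fun N => (∏ j ∈ Finset.range N, (1 + z * q ^ (2 * j + 1))) *
      (∏ j ∈ Finset.range N, (1 + z⁻¹ * q ^ (2 * j + 1)))) atTop
      (𝓝 (E⁻¹ * ∑' k : ℤ, q ^ (k ^ 2) * z ^ k)) := by
    apply T2'.congr
    intro N
    rw [← claim1 N, ← finite_jtp hq h0 hz N]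
  have key := tendsto_nhds_unique T2 T1
  rw [← key, ← mul_assoc, mul_inv_cancel₀ hEne, one_mul]

end Stmt18

set_option maxHeartbeats 1000000 in
theorem stmt_18 (q : ℂ) (hq : ‖q‖ < 1) :
    (∑' m : ℤ, q ^ (m ^ 2)) =
      (∏' m : ℕ, (1 - q ^ (8 * m + 8))) *
        ((∏' m : ℕ, (1 + q ^ (8 * m + 4))) ^ 2
          + 2 * q * (∏' m : ℕ, (1 + q ^ (8 * m + 8))) ^ 2) := by
  open Stmt18 Filter in
  by_cases h0 : q = 0
  · subst h0
    rw [tsum_eq_single 0 (fun m hm => zero_zpow _ (pow_ne_zero 2 hm))]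
    have t1 : (∏' m : ℕ, (1 - (0:ℂ) ^ (8 * m + 8))) = 1 := by
      rw [tprod_congr (fun m : ℕ => by
        rw [zero_pow (by omega : 8 * m + 8 ≠ 0), sub_zero] : ∀ m : ℕ,
          (1 - (0:ℂ) ^ (8 * m + 8)) = 1), tprod_one]
    have t2 : (∏' m : ℕ, (1 + (0:ℂ) ^ (8 * m + 4))) = 1 := by
      rw [tprod_congr (fun m : ℕ => by
        rw [zero_pow (by omega : 8 * m + 4 ≠ 0), add_zero] : ∀ m : ℕ,
          (1 + (0:ℂ) ^ (8 * m + 4)) = 1), tprod_one]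
    rw [t1, t2]
    norm_num
  · -- main case
    have h4 : ‖q ^ (4:ℕ)‖ < 1 := abs_pow_lt_one hq (by omega)
    have h40 : q ^ (4:ℕ) ≠ 0 := pow_ne_zero 4 h0
    have hsum : Summable (fun m : ℤ => q ^ (m ^ 2)) := by
      have := summable_qz hq 1
      simpa [one_zpow] using this
    set s : Set ℤ := {m : ℤ | m % 2 = 0} with hs
    have hb1 : Function.Bijective (fun k : ℤ => (⟨2 * k, by simp only [hs, Set.mem_setOf_eq]; omega⟩ : s)) :=
      ⟨fun a b hab => by have := congrArg Subtype.val hab; simp at this; omega,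
       fun x => by
        obtain ⟨m, hm⟩ := x
        simp only [hs, Set.mem_setOf_eq] at hm
        exact ⟨m / 2, Subtype.ext (by simp; omega)⟩⟩
    have hb2 : Function.Bijective (fun k : ℤ => (⟨2 * k + 1, by simp only [hs, Set.mem_compl_iff, Set.mem_setOf_eq]; omega⟩ : ↥sᶜ)) :=
      ⟨fun a b hab => by have := congrArg Subtype.val hab; simp at this; omega,
       fun x => by
        obtain ⟨m, hm⟩ := x
        simp only [hs, Set.mem_compl_iff, Set.mem_setOf_eq] at hm
        exact ⟨(m - 1) / 2, Subtype.ext (by simp; omega)⟩⟩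
    have hsplit := Summable.tsum_subtype_add_tsum_subtype_compl hsum s
    rw [← hsplit]
    have heven : (∑' x : s, q ^ (((x : ℤ)) ^ 2)) = ∑' k : ℤ, (q^(4:ℕ)) ^ (k^2) * (1:ℂ) ^ k := by
      rw [← Equiv.tsum_eq (Equiv.ofBijective _ hb1) (fun x : s => q ^ (((x : ℤ)) ^ 2))]
      apply tsum_congr
      intro k
      show q ^ ((2 * k) ^ 2) = _
      rw [one_zpow, mul_one, ← zpow_natCast q 4, ← zpow_mul]
      congr 1
      push_cast
      ring
    have hodd : (∑' x : ↥sᶜ, q ^ (((x : ℤ)) ^ 2))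
        = ∑' k : ℤ, q * ((q^(4:ℕ)) ^ (k^2) * (q^(4:ℕ)) ^ k) := by
      rw [← Equiv.tsum_eq (Equiv.ofBijective _ hb2) (fun x : ↥sᶜ => q ^ (((x : ℤ)) ^ 2))]
      apply tsum_congr
      intro k
      show q ^ ((2 * k + 1) ^ 2) = _
      rw [← zpow_natCast q 4, ← zpow_mul, ← zpow_mul, ← zpow_add₀ h0,
        show ((2 * k + 1) ^ 2 : ℤ) = 1 + ((4:ℕ) * k ^ 2 + (4:ℕ) * k) from by push_cast; ring,
        zpow_add₀ h0, zpow_one]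
    rw [heven, hodd]
    -- apply jtp to the even part
    rw [jtp h4 h40 one_ne_zero
      (fun j => by rw [one_mul]; exact one_add_ne (abs_pow_lt_one h4 (by omega)))
      (fun j => by rw [inv_one, one_mul]; exact one_add_ne (abs_pow_lt_one h4 (by omega)))]
    rw [tsum_mul_left, jtp h4 h40 h40
      (fun j => by
        apply one_add_ne
        rw [← pow_succ']
        exact abs_pow_lt_one h4 (by omega))
      (fun j => by
        have hred : (q^(4:ℕ))⁻¹ * (q^(4:ℕ)) ^ (2*j+1) = (q^(4:ℕ)) ^ (2*j) := by
          have hps : (q^(4:ℕ))^(2*j+1) = (q^(4:ℕ))^(2*j) * q^(4:ℕ) := pow_succ _ _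
          rw [hps, mul_comm ((q^(4:ℕ))^(2*j)) (q^(4:ℕ)), ← mul_assoc, inv_mul_cancel₀ h40, one_mul]
        rw [hred]
        rcases Nat.eq_zero_or_pos j with rfl | hj
        · norm_num
        · exact one_add_ne (abs_pow_lt_one h4 (by omega)))]
    have c1 : (∏' (i : ℕ), (1 - (q ^ (4:ℕ)) ^ (2 * i + 2))) = ∏' (m : ℕ), (1 - q ^ (8 * m + 8)) :=
      tprod_congr fun i => by rw [← pow_mul, show 4 * (2 * i + 2) = 8 * i + 8 from by ring]
    have c2 : (∏' (j : ℕ), (1 + 1 * (q ^ (4:ℕ)) ^ (2 * j + 1)))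
        = ∏' (m : ℕ), (1 + q ^ (8 * m + 4)) :=
      tprod_congr fun j => by
        rw [one_mul, ← pow_mul, show 4 * (2 * j + 1) = 8 * j + 4 from by ring]
    have c3 : (∏' (j : ℕ), (1 + 1⁻¹ * (q ^ (4:ℕ)) ^ (2 * j + 1)))
        = ∏' (m : ℕ), (1 + q ^ (8 * m + 4)) :=
      tprod_congr fun j => by
        rw [inv_one, one_mul, ← pow_mul, show 4 * (2 * j + 1) = 8 * j + 4 from by ring]
    have c4 : (∏' (j : ℕ), (1 + q ^ (4:ℕ) * (q ^ (4:ℕ)) ^ (2 * j + 1)))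
        = ∏' (m : ℕ), (1 + q ^ (8 * m + 8)) :=
      tprod_congr fun j => by
        rw [← pow_succ', show 2 * j + 1 + 1 = 2 * j + 2 from by ring, ← pow_mul,
          show 4 * (2 * j + 2) = 8 * j + 8 from by ring]
    have c5a : (∏' (j : ℕ), (1 + (q ^ (4:ℕ))⁻¹ * (q ^ (4:ℕ)) ^ (2 * j + 1)))
        = ∏' (j : ℕ), (1 + q ^ (8 * j)) :=
      tprod_congr fun j => by
        have hps : (q ^ (4:ℕ)) ^ (2 * j + 1) = (q ^ (4:ℕ)) ^ (2 * j) * q ^ (4:ℕ) := pow_succ _ _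
        rw [hps, mul_comm ((q ^ (4:ℕ)) ^ (2 * j)) (q ^ (4:ℕ)), ← mul_assoc,
          inv_mul_cancel₀ h40, one_mul, ← pow_mul, show 4 * (2 * j) = 8 * j from by ring]
    have hm8 : Multipliable (fun j : ℕ => 1 + q ^ (8 * (j + 1))) := by
      apply multipliable_one_add
      · apply Summable.congr (summable_qpow hq (show (8:ℕ) ≠ 0 from by norm_num) 8)
        intro n
        rw [show 8 * (n + 1) = 8 * n + 8 from by ring]
      · intro n
        exact one_add_ne (abs_pow_lt_one hq (by omega))
    have c5 : (∏' (j : ℕ), (1 + q ^ (8 * j))) = 2 * ∏' (m : ℕ), (1 + q ^ (8 * m + 8)) := by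
      rw [tprod_eq_zero_mul' hm8, show (1 + q ^ (8 * 0) : ℂ) = 2 from by norm_num,
        tprod_congr (fun b => by rw [show 8 * (b + 1) = 8 * b + 8 from by ring] :
          ∀ b : ℕ, (1 + q ^ (8 * (b + 1))) = 1 + q ^ (8 * b + 8))]
    rw [c1, c2, c3, c4, c5a, c5]
    ring
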